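/- The 5-dimensional nilpotent commutative associative algebra A₀₉ degenerates to A₁₅: the structure λ of A₁₅ lies in the closure of the GL(5,ℂ)-orbit O(μ) of the structure μ of A₀₉ (closure in the standard topology on the space of bilinear maps ℂ⁵ × ℂ⁵ → ℂ⁵). -/

import Mathlib

set_option maxHeartbeats 2000000
set_option synthInstance.maxHeartbeats 2000000
set_option linter.unnecessarySeqFocus false

open ContinuousLinearMap

/-- The underlying space `ℂⁿ`. -/
abbrev Vn (n : ℕ) := Fin n → ℂ

/-- The space of bilinear maps `ℂⁿ × ℂⁿ → ℂⁿ` (as continuous linear maps in two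
arguments), carrying its standard topology as a finite-dimensional complex vector space. -/
abbrev Bil (n : ℕ) := Vn n →L[ℂ] Vn n →L[ℂ] Vn n

/-- The action of `GL(n, ℂ)` on bilinear maps: `(g · μ)(x, y) = g (μ (g⁻¹ x) (g⁻¹ y))`. -/
noncomputable def act {n : ℕ} (g : Vn n ≃L[ℂ] Vn n) (μ : Bil n) : Bil n :=
  ((compL ℂ (Vn n) (Vn n) (Vn n)).flip (g.symm : Vn n →L[ℂ] Vn n)).comp
    (((compL ℂ (Vn n) (Vn n) (Vn n)) (g : Vn n →L[ℂ] Vn n)).comp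
      (μ.comp (g.symm : Vn n →L[ℂ] Vn n)))

@[simp] lemma act_apply {n : ℕ} (g : Vn n ≃L[ℂ] Vn n) (μ : Bil n) (x y : Vn n) :
    act g μ x y = g (μ (g.symm x) (g.symm y)) := rfl

/-- The orbit `O(μ)` of a bilinear map under the `GL(n, ℂ)`-action. -/
noncomputable def orbit {n : ℕ} (μ : Bil n) : Set (Bil n) :=
  {ν | ∃ g : Vn n ≃L[ℂ] Vn n, ν = act g μ}

/-- The standard basis `e₁, …, e₅` of `ℂ⁵` (zero-indexed: `e i` is `e_{i+1}`). -/
def e (i : Fin 5) : Vn 5 := Pi.single i 1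

/-- Multiplication table of the algebra `𝐀09` (entry `(i, j)` is `eᵢ · eⱼ`). -/
def tblA09 : Fin 5 → Fin 5 → Vn 5 :=
  ![![0, e 3, e 4, 0, 0],
   ![e 3, 0, -e 4, 0, 0],
   ![e 4, -e 4, 0, 0, 0],
   ![0, 0, 0, 0, 0],
   ![0, 0, 0, 0, 0]]

/-- Multiplication table of the algebra `𝐀15` (entry `(i, j)` is `eᵢ · eⱼ`). -/
def tblA15 : Fin 5 → Fin 5 → Vn 5 :=
  ![![0, e 2, 0, 0, 0],
   ![e 2, 0, 0, 0, 0],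
   ![0, 0, 0, 0, 0],
   ![0, 0, 0, e 4, 0],
   ![0, 0, 0, 0, 0]]

instance : ContinuousAdd (Bil 5) :=
  (inferInstance : IsTopologicalAddGroup (Bil 5)).toContinuousAdd

lemma pi_decomp (x : Vn 5) : x = ∑ i, x i • e i := by
  funext k
  simp [e, Pi.single_apply, Finset.sum_apply]

lemma bil_apply (ν : Bil 5) (x y : Vn 5) :
    ν x y = ∑ i, ∑ j, (x i * y j) • ν (e i) (e j) := by
  conv_lhs => rw [pi_decomp x, pi_decomp y]
  simp only [map_sum, map_smul, ContinuousLinearMap.coe_sum', Finset.sum_apply,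
    ContinuousLinearMap.coe_smul', Pi.smul_apply, Finset.smul_sum, smul_smul]
  rw [Finset.sum_comm]
  congr 1; funext i; congr 1; funext j; ring_nf

lemma bil_ext {ν₁ ν₂ : Bil 5} (h : ∀ i j, ν₁ (e i) (e j) = ν₂ (e i) (e j)) : ν₁ = ν₂ := by
  ext x y
  rw [bil_apply ν₁, bil_apply ν₂]
  simp [h]

/-- The matrix sending the standard basis to the degenerating basis
`f₀ = e₀, f₁ = e₂, f₂ = e₄, f₃ = s(e₀+e₁), f₄ = 2s²e₃`. -/
noncomputable def Pm (s : ℂ) : Matrix (Fin 5) (Fin 5) ℂ :=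
  !![1, 0, 0, s, 0;
     0, 0, 0, s, 0;
     0, 1, 0, 0, 0;
     0, 0, 0, 0, 2*s^2;
     0, 0, 1, 0, 0]

/-- The inverse of `Pm s`. -/
noncomputable def Qm (s : ℂ) : Matrix (Fin 5) (Fin 5) ℂ :=
  !![1, -1, 0, 0, 0;
     0, 0, 1, 0, 0;
     0, 0, 0, 0, 1;
     0, 1/s, 0, 0, 0;
     0, 0, 0, 1/(2*s^2), 0]

lemma QP (s : ℂ) (hs : s ≠ 0) : Qm s * Pm s = 1 := by
  have h2 : (2:ℂ)*s^2 ≠ 0 := mul_ne_zero two_ne_zero (pow_ne_zero 2 hs)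
  ext i j
  fin_cases i <;> fin_cases j <;>
    simp [Qm, Pm, Matrix.mul_apply, Fin.sum_univ_five, Matrix.one_apply,
      Matrix.vecHead, Matrix.vecTail] <;>
    field_simp <;> ring

lemma PQ (s : ℂ) (hs : s ≠ 0) : Pm s * Qm s = 1 := by
  have h2 : (2:ℂ)*s^2 ≠ 0 := mul_ne_zero two_ne_zero (pow_ne_zero 2 hs)
  ext i j
  fin_cases i <;> fin_cases j <;>
    simp [Qm, Pm, Matrix.mul_apply, Fin.sum_univ_five, Matrix.one_apply,
      Matrix.vecHead, Matrix.vecTail] <;>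
    field_simp <;> ring

/-- The basis-change element of `GL(5,ℂ)` used in the degeneration. -/
noncomputable def gE (s : ℂ) (hs : s ≠ 0) : Vn 5 ≃L[ℂ] Vn 5 :=
  (LinearEquiv.ofLinear (Matrix.toLin' (Qm s)) (Matrix.toLin' (Pm s))
    (by rw [← Matrix.toLin'_mul, QP s hs, Matrix.toLin'_one])
    (by rw [← Matrix.toLin'_mul, PQ s hs, Matrix.toLin'_one])).toContinuousLinearEquiv

lemma gE_apply (s : ℂ) (hs : s ≠ 0) (x : Vn 5) : gE s hs x = (Qm s).mulVec x := rfl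
lemma gE_symm_apply (s : ℂ) (hs : s ≠ 0) (x : Vn 5) :
    (gE s hs).symm x = (Pm s).mulVec x := rfl

/-- The correction bilinear map: `B(x,y) = (x₀ y₃ + x₃ y₀) • e₄`. -/
noncomputable def Bcor : Bil 5 :=
  (proj 0 : Vn 5 →L[ℂ] ℂ).smulRight ((proj 3 : Vn 5 →L[ℂ] ℂ).smulRight (e 4)) +
  (proj 3 : Vn 5 →L[ℂ] ℂ).smulRight ((proj 0 : Vn 5 →L[ℂ] ℂ).smulRight (e 4))

lemma key (μ lam : Bil 5)
    (hμ : ∀ i j : Fin 5, μ (e i) (e j) = tblA09 i j)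
    (hlam : ∀ i j : Fin 5, lam (e i) (e j) = tblA15 i j)
    (s : ℂ) (hs : s ≠ 0) :
    act (gE s hs) μ = lam + (1/(2*s)) • Bcor := by
  have h2 : (2:ℂ)*s^2 ≠ 0 := mul_ne_zero two_ne_zero (pow_ne_zero 2 hs)
  apply bil_ext
  intro i j
  have hrhs : (lam + (1/(2*s)) • Bcor) (e i) (e j)
      = tblA15 i j + ((1/(2*s)) * ((e i 0) * (e j 3) + (e i 3) * (e j 0))) • e 4 := by
    rw [← hlam i j]
    simp [Bcor, ContinuousLinearMap.add_apply, ContinuousLinearMap.smul_apply,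
      smul_smul, mul_add, add_smul, mul_assoc]
  rw [act_apply, gE_symm_apply, gE_symm_apply, gE_apply, hrhs, bil_apply μ]
  simp only [hμ]
  fin_cases i <;> fin_cases j <;>
    (funext k; fin_cases k) <;>
    simp [Pm, Qm, Matrix.mulVec, dotProduct, Fin.sum_univ_five, e, Pi.single_apply,
      tblA09, tblA15, Matrix.vecHead, Matrix.vecTail, Finset.sum_apply, Pi.smul_apply] <;>
    field_simp <;> ring

/-- The $5$-dimensional nilpotent commutative associative algebra `𝐀09` degenerates to
`𝐀15`: the structure `λ` of `𝐀15` lies in the closure of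
the `GL(5, ℂ)`-orbit `O(μ)` of the structure `μ` of `𝐀09`. -/
theorem A09_deg_A15 (μ lam : Bil 5)
    (hμ : ∀ i j : Fin 5, μ (e i) (e j) = tblA09 i j)
    (hlam : ∀ i j : Fin 5, lam (e i) (e j) = tblA15 i j) :
    lam ∈ closure (orbit μ) := by
  have hs : ∀ n : ℕ, ((n:ℂ)+1) ≠ 0 := fun n => Nat.cast_add_one_ne_zero n
  have hmem : ∀ n : ℕ, lam + (1/(2*((n:ℂ)+1))) • Bcor ∈ orbit μ := fun n =>
    ⟨gE ((n:ℂ)+1) (hs n), (key μ lam hμ hlam _ (hs n)).symm⟩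
  have hc : Filter.Tendsto (fun n : ℕ => (1/(2*((n:ℂ)+1)))) Filter.atTop (nhds 0) := by
    rw [tendsto_zero_iff_norm_tendsto_zero]
    have hnorm : ∀ n : ℕ, ‖(1/(2*((n:ℂ)+1)))‖ = 1/(2*((n:ℝ)+1)) := by
      intro n
      have h : (2*((n:ℂ)+1)) = ((2*(n+1):ℕ):ℂ) := by push_cast; ring
      rw [norm_div, norm_one, h, Complex.norm_natCast]
      push_cast; ring
    simp only [hnorm]
    have h1 : Filter.Tendsto (fun n : ℕ => 2*((n:ℝ)+1)) Filter.atTop Filter.atTop := by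
      apply Filter.Tendsto.const_mul_atTop (by norm_num)
      exact Filter.tendsto_atTop_add_const_right _ 1 tendsto_natCast_atTop_atTop
    simp only [one_div]
    exact h1.inv_tendsto_atTop
  have hlim : Filter.Tendsto (fun n : ℕ => lam + (1/(2*((n:ℂ)+1))) • Bcor)
      Filter.atTop (nhds lam) := by
    have hsm := Filter.Tendsto.smul hc
      (tendsto_const_nhds (x := Bcor) (f := (Filter.atTop : Filter ℕ)))
    have h2 := (tendsto_const_nhds (x := lam) (f := (Filter.atTop : Filter ℕ))).add hsm
    convert h2 using 2
    ext x y
    simp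
  exact mem_closure_of_tendsto hlim (Filter.Eventually.of_forall hmem)
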